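/- For every real β, the internal energy on the Nishimori line of the Gaussian Edwards–Anderson model satisfies the exact identity exp(−N_B·β²/2) · ∫_{ℝ^E} exp(β·Σ_{e∈E} J(e)) · (Σ_S H_J(S)·exp(β·H_J(S))) / Z_J(β) dμ(J) = N_B · β. -/

import Mathlib

open Finset MeasureTheory ProbabilityTheory

open scoped ENNReal NNReal

/-- Gaussian-disorder Ising energy H_J(S), spins valued in the units of the integers. -/
noncomputable def isingHJ {V E : Type*} [Fintype E] (i j : E → V)
    (J : E → ℝ) (S : V → ℤˣ) : ℝ :=
  ∑ e, J e * ((S (i e) : ℤ) : ℝ) * ((S (j e) : ℤ) : ℝ)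

/-- Gaussian-disorder partition function Z_J(β). -/
noncomputable def isingZJ {V E : Type*} [Fintype V] [DecidableEq V] [Fintype E]
    (i j : E → V) (β : ℝ) (J : E → ℝ) : ℝ :=
  ∑ S : V → ℤˣ, Real.exp (β * isingHJ i j J S)

/- ------------------ Gaussian one-dimensional lemmas ------------------ -/

lemma gauss_integral_eq (g : ℝ → ℝ) :
    ∫ x, g x ∂(gaussianReal 0 1) = ∫ x, gaussianPDFReal 0 1 x * g x := by
  rw [gaussianReal_of_var_ne_zero 0 one_ne_zero]
  rw [show gaussianPDF 0 1 = fun x => ((gaussianPDFReal 0 1 x).toNNReal : ℝ≥0∞) from rfl]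
  rw [integral_withDensity_eq_integral_smul
    ((measurable_gaussianPDFReal 0 1).real_toNNReal) g]
  congr 1 with x
  simp [NNReal.smul_def, Real.coe_toNNReal _ (gaussianPDFReal_nonneg 0 1 x)]

lemma gauss_integrable_iff (g : ℝ → ℝ) :
    Integrable g (gaussianReal 0 1) ↔
      Integrable (fun x => gaussianPDFReal 0 1 x * g x) := by
  rw [gaussianReal_of_var_ne_zero 0 one_ne_zero]
  rw [integrable_withDensity_iff (measurable_gaussianPDF 0 1)
    (ae_of_all _ fun x => ENNReal.ofReal_lt_top)]
  constructor <;> intro h <;>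
  · refine h.congr (ae_of_all _ fun x => ?_)
    simp [gaussianPDF, ENNReal.toReal_ofReal (gaussianPDFReal_nonneg 0 1 x)]
    ring

lemma pdf_tilt (c x : ℝ) :
    gaussianPDFReal 0 1 x * Real.exp (c * x)
      = Real.exp (c ^ 2 / 2) * gaussianPDFReal c 1 x := by
  simp only [gaussianPDFReal, NNReal.coe_one, mul_one]
  rw [mul_assoc, ← Real.exp_add,
    show Real.exp (c ^ 2 / 2) * ((Real.sqrt (2 * Real.pi))⁻¹ * Real.exp (-(x - c) ^ 2 / 2))
      = (Real.sqrt (2 * Real.pi))⁻¹ * Real.exp (c ^ 2 / 2 + -(x - c) ^ 2 / 2) by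
        rw [Real.exp_add]; ring]
  congr 1
  ring

lemma pdf_even (x : ℝ) : gaussianPDFReal 0 1 (-x) = gaussianPDFReal 0 1 x := by
  simp [gaussianPDFReal, neg_sq]

lemma integrable_id_mul_pdf0 : Integrable (fun x => x * gaussianPDFReal 0 1 x) := by
  have h := (integrable_mul_exp_neg_mul_sq (b := (1:ℝ)/2) (by norm_num)).const_mul
    ((Real.sqrt (2 * Real.pi * 1))⁻¹)
  refine h.congr (ae_of_all _ fun x => ?_)
  simp only [gaussianPDFReal, NNReal.coe_one, mul_one]
  ring_nf

lemma integral_id_mul_pdf0 : ∫ x, x * gaussianPDFReal 0 1 x = 0 := by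
  have h := integral_neg_eq_self (fun x => x * gaussianPDFReal 0 1 x) volume
  simp only [pdf_even, neg_mul] at h
  rw [integral_neg] at h
  linarith

lemma integrable_id_mul_pdf (c : ℝ) : Integrable (fun x => x * gaussianPDFReal c 1 x) := by
  have h : Integrable (fun x => (x + c) * gaussianPDFReal 0 1 x) :=
    (integrable_id_mul_pdf0.add ((integrable_gaussianPDFReal 0 1).const_mul c)).congr
      (ae_of_all _ fun x => by simp only [Pi.add_apply]; ring)
  have h2 := h.comp_sub_right c
  refine h2.congr (ae_of_all _ fun x => ?_)
  simp [gaussianPDFReal_sub]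

lemma integral_id_mul_pdf (c : ℝ) : ∫ x, x * gaussianPDFReal c 1 x = c := by
  rw [← integral_add_right_eq_self (fun x => x * gaussianPDFReal c 1 x) c]
  have h : ∀ x : ℝ, (x + c) * gaussianPDFReal c 1 (x + c)
      = x * gaussianPDFReal 0 1 x + c * gaussianPDFReal 0 1 x := by
    intro x
    rw [gaussianPDFReal_add, sub_self]
    ring
  simp_rw [h]
  rw [integral_add integrable_id_mul_pdf0
    (((integrable_gaussianPDFReal 0 1).const_mul c)), integral_id_mul_pdf0,
    integral_const_mul, integral_gaussianPDFReal_eq_one 0 one_ne_zero]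
  simp

lemma gauss_exp_int (c : ℝ) :
    ∫ x, Real.exp (c * x) ∂(gaussianReal 0 1) = Real.exp (c ^ 2 / 2) := by
  rw [gauss_integral_eq]
  simp_rw [pdf_tilt]
  rw [integral_const_mul, integral_gaussianPDFReal_eq_one c one_ne_zero, mul_one]

lemma gauss_id_exp_int (c : ℝ) :
    ∫ x, x * Real.exp (c * x) ∂(gaussianReal 0 1) = c * Real.exp (c ^ 2 / 2) := by
  rw [gauss_integral_eq]
  have h : ∀ x : ℝ, gaussianPDFReal 0 1 x * (x * Real.exp (c * x))
      = Real.exp (c ^ 2 / 2) * (x * gaussianPDFReal c 1 x) := by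
    intro x
    rw [show gaussianPDFReal 0 1 x * (x * Real.exp (c * x))
        = x * (gaussianPDFReal 0 1 x * Real.exp (c * x)) by ring, pdf_tilt]
    ring
  simp_rw [h]
  rw [integral_const_mul, integral_id_mul_pdf, mul_comm]

lemma gauss_exp_integrable (c : ℝ) :
    Integrable (fun x => Real.exp (c * x)) (gaussianReal 0 1) := by
  rw [gauss_integrable_iff]
  refine (((integrable_gaussianPDFReal c 1).const_mul (Real.exp (c ^ 2 / 2))).congr
    (ae_of_all _ fun x => ?_))
  simp only []
  rw [pdf_tilt]

lemma gauss_id_exp_integrable (c : ℝ) :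
    Integrable (fun x => x * Real.exp (c * x)) (gaussianReal 0 1) := by
  rw [gauss_integrable_iff]
  refine (((integrable_id_mul_pdf c).const_mul (Real.exp (c ^ 2 / 2))).congr
    (ae_of_all _ fun x => ?_))
  simp only []
  rw [show gaussianPDFReal 0 1 x * (x * Real.exp (c * x))
      = x * (gaussianPDFReal 0 1 x * Real.exp (c * x)) by ring, pdf_tilt]
  ring

lemma gauss_abs_exp_integrable (c : ℝ) :
    Integrable (fun x => |x| * Real.exp (c * x)) (gaussianReal 0 1) := by
  refine (gauss_id_exp_integrable c).abs.congr (ae_of_all _ fun x => ?_)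
  simp only []
  rw [abs_mul, abs_of_pos (Real.exp_pos _)]

/- ------------------ product measure lemmas ------------------ -/

lemma pi_integral_prod {ι : Type*} [Fintype ι] (f : ι → ℝ → ℝ) :
    ∫ x : ι → ℝ, ∏ e, f e (x e) ∂(Measure.pi fun _ => gaussianReal 0 1)
      = ∏ e, ∫ x, f e x ∂(gaussianReal 0 1) := by
  letI : MeasureSpace ℝ := ⟨gaussianReal 0 1⟩
  haveI : SigmaFinite (volume : Measure ℝ) :=
    (inferInstance : SigmaFinite (gaussianReal 0 1))
  exact MeasureTheory.integral_fintype_prod_eq_prod f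

lemma pi_integrable_prod {ι : Type*} [Fintype ι] (f : ι → ℝ → ℝ)
    (hf : ∀ e, Integrable (f e) (gaussianReal 0 1)) :
    Integrable (fun x : ι → ℝ => ∏ e, f e (x e))
      (Measure.pi fun _ => gaussianReal 0 1) := by
  letI : MeasureSpace ℝ := ⟨gaussianReal 0 1⟩
  haveI : SigmaFinite (volume : Measure ℝ) :=
    (inferInstance : SigmaFinite (gaussianReal 0 1))
  exact MeasureTheory.Integrable.fintype_prod hf

lemma gauss_map_sign {c : ℝ} (hc : c = 1 ∨ c = -1) :
    Measure.map (fun x => c * x) (gaussianReal 0 1) = gaussianReal 0 1 := by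
  have h2 : c ^ 2 = 1 := by rcases hc with h | h <;> rw [h] <;> norm_num
  rw [show (fun x : ℝ => c * x) = (c * ·) from rfl, gaussianReal_map_const_mul c]
  rw [mul_zero]
  congr 1
  rw [mul_one]
  ext
  simpa using h2

lemma measurePreserving_signs {ι : Type*} [Fintype ι] (s : ι → ℝ)
    (hs : ∀ e, s e = 1 ∨ s e = -1) :
    MeasurePreserving (fun (J : ι → ℝ) e => s e * J e)
      (Measure.pi fun _ => gaussianReal 0 1) (Measure.pi fun _ => gaussianReal 0 1) := by
  have hmeas : Measurable (fun (J : ι → ℝ) e => s e * J e) :=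
    measurable_pi_lambda _ fun e => (measurable_pi_apply e).const_mul _
  refine ⟨hmeas, ?_⟩
  refine (Measure.pi_eq (μ := fun _ : ι => gaussianReal 0 1) fun A hA => ?_).symm
  rw [Measure.map_apply hmeas (MeasurableSet.univ_pi hA)]
  have hpre : (fun (J : ι → ℝ) e => s e * J e) ⁻¹' (Set.univ.pi A)
      = Set.univ.pi (fun e => (fun x => s e * x) ⁻¹' A e) := by
    ext J
    simp [Set.mem_pi]
  rw [hpre, Measure.pi_pi]
  refine Finset.prod_congr rfl fun e _ => ?_
  rw [← Measure.map_apply ((measurable_id'.const_mul _)) (hA e), gauss_map_sign (hs e)]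

/- ------------------ Ising model lemmas ------------------ -/

section ising

variable {V E : Type*} [Fintype V] [DecidableEq V] [Fintype E] [DecidableEq E]
  (i j : E → V)

/-- the sign σ_S(e) = S(i e) S(j e), as a real number. -/
noncomputable def spinSign (S : V → ℤˣ) (e : E) : ℝ :=
  ((S (i e) : ℤ) : ℝ) * ((S (j e) : ℤ) : ℝ)

lemma spinSign_cases (S : V → ℤˣ) (e : E) :
    spinSign i j S e = 1 ∨ spinSign i j S e = -1 := by
  rcases Int.units_eq_one_or (S (i e)) with h1 | h1 <;>
    rcases Int.units_eq_one_or (S (j e)) with h2 | h2 <;>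
    simp [spinSign, h1, h2]

lemma spinSign_sq (S : V → ℤˣ) (e : E) : spinSign i j S e ^ 2 = 1 := by
  rcases spinSign_cases i j S e with h | h <;> rw [h] <;> norm_num

lemma abs_spinSign (S : V → ℤˣ) (e : E) : |spinSign i j S e| = 1 := by
  rcases spinSign_cases i j S e with h | h <;> rw [h] <;> norm_num

lemma isingHJ_eq (J : E → ℝ) (S : V → ℤˣ) :
    isingHJ i j J S = ∑ e, J e * spinSign i j S e := by
  refine Finset.sum_congr rfl fun e _ => ?_
  rw [spinSign]
  ring

/-- The exponential weight as a product over bonds. -/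
lemma exp_H (β : ℝ) (J : E → ℝ) (S : V → ℤˣ) :
    Real.exp (β * isingHJ i j J S)
      = ∏ e, Real.exp (β * spinSign i j S e * J e) := by
  rw [← Real.exp_sum]
  congr 1
  rw [isingHJ_eq, Finset.mul_sum]
  exact Finset.sum_congr rfl fun e _ => by ring

lemma isingHJ_gauge (τ : V → ℤˣ) (J : E → ℝ) (S : V → ℤˣ) :
    isingHJ i j (fun e => spinSign i j τ e * J e) S
      = isingHJ i j J (fun v => τ v * S v) := by
  refine Finset.sum_congr rfl fun e _ => ?_
  simp only [spinSign, Units.val_mul, Int.cast_mul]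
  ring

lemma mul_involutive (τ : V → ℤˣ) :
    Function.Involutive (fun (S : V → ℤˣ) v => τ v * S v) := by
  intro S
  funext v
  simp [← mul_assoc, Int.units_mul_self]

lemma isingZJ_gauge (β : ℝ) (τ : V → ℤˣ) (J : E → ℝ) :
    isingZJ i j β (fun e => spinSign i j τ e * J e) = isingZJ i j β J := by
  unfold isingZJ
  simp_rw [isingHJ_gauge]
  exact Fintype.sum_bijective _ (mul_involutive τ).bijective _ _ (fun S => rfl)

/-- the numerator U_J(β). -/
noncomputable def isingU (β : ℝ) (J : E → ℝ) : ℝ :=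
  ∑ S : V → ℤˣ, isingHJ i j J S * Real.exp (β * isingHJ i j J S)

lemma isingU_gauge (β : ℝ) (τ : V → ℤˣ) (J : E → ℝ) :
    isingU i j β (fun e => spinSign i j τ e * J e) = isingU i j β J := by
  unfold isingU
  simp_rw [isingHJ_gauge]
  exact Fintype.sum_bijective _ (mul_involutive τ).bijective _ _ (fun S => rfl)

lemma isingZJ_pos (β : ℝ) (J : E → ℝ) : 0 < isingZJ i j β J :=
  Finset.sum_pos (fun S _ => Real.exp_pos _) Finset.univ_nonempty

lemma isingHJ_continuous (S : V → ℤˣ) : Continuous fun J : E → ℝ => isingHJ i j J S := by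
  refine continuous_finset_sum _ fun e _ => ?_
  exact ((continuous_apply e).mul continuous_const).mul continuous_const

lemma isingZJ_continuous (β : ℝ) : Continuous (isingZJ i j β) := by
  refine continuous_finset_sum _ fun S _ => ?_
  exact (Real.continuous_exp.comp ((continuous_const.mul (isingHJ_continuous i j S))))

lemma isingU_continuous (β : ℝ) : Continuous (isingU i j β) := by
  refine continuous_finset_sum _ fun S _ => ?_
  exact (isingHJ_continuous i j S).mul
    (Real.continuous_exp.comp ((continuous_const.mul (isingHJ_continuous i j S))))

lemma absH_le (J : E → ℝ) (S : V → ℤˣ) : |isingHJ i j J S| ≤ ∑ e, |J e| := by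
  rw [isingHJ_eq]
  refine (Finset.abs_sum_le_sum_abs _ _).trans (le_of_eq ?_)
  refine Finset.sum_congr rfl fun e _ => ?_
  rw [abs_mul, abs_spinSign, mul_one]

lemma absUdivZ_le (β : ℝ) (J : E → ℝ) :
    |isingU i j β J / isingZJ i j β J| ≤ ∑ S : V → ℤˣ, |isingHJ i j J S| := by
  have hZ := isingZJ_pos i j β J
  rw [abs_div, abs_of_pos hZ, div_le_iff₀ hZ]
  calc |isingU i j β J| ≤ ∑ S : V → ℤˣ, |isingHJ i j J S| * Real.exp (β * isingHJ i j J S) := by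
        refine (Finset.abs_sum_le_sum_abs _ _).trans (le_of_eq ?_)
        exact Finset.sum_congr rfl fun S _ => by
          rw [abs_mul, abs_of_pos (Real.exp_pos _)]
    _ ≤ ∑ S : V → ℤˣ, |isingHJ i j J S| * isingZJ i j β J := by
        refine Finset.sum_le_sum fun S _ => ?_
        refine mul_le_mul_of_nonneg_left ?_ (abs_nonneg _)
        exact Finset.single_le_sum (f := fun S' => Real.exp (β * isingHJ i j J S'))
          (fun S' _ => (Real.exp_pos _).le) (Finset.mem_univ S)
    _ = (∑ S : V → ℤˣ, |isingHJ i j J S|) * isingZJ i j β J := by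
        rw [Finset.sum_mul]

end ising

lemma prod_factor_eq {E : Type*} [Fintype E] [DecidableEq E]
    (a c J : E → ℝ) (e0 : E) :
    ∏ e, ((if e = e0 then a e else 1) * Real.exp (c e * J e))
      = a e0 * ∏ e, Real.exp (c e * J e) := by
  rw [Finset.prod_mul_distrib, Finset.prod_ite_eq' Finset.univ e0 a]
  simp

lemma sign_moment {σ : ℝ} (β : ℝ) (hσ : σ = 1 ∨ σ = -1) :
    ∫ x, (σ * x) * Real.exp (β * σ * x) ∂(gaussianReal 0 1)
      = β * Real.exp (β ^ 2 / 2) := by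
  have h : ∀ x : ℝ, (σ * x) * Real.exp (β * σ * x) = σ * (x * Real.exp ((β * σ) * x)) := by
    intro x; ring
  simp_rw [h]
  rw [integral_const_mul, gauss_id_exp_int]
  rcases hσ with h | h <;> rw [h] <;> ring_nf

lemma sign_exp_moment {σ : ℝ} (β : ℝ) (hσ : σ = 1 ∨ σ = -1) :
    ∫ x, Real.exp (β * σ * x) ∂(gaussianReal 0 1) = Real.exp (β ^ 2 / 2) := by
  rw [gauss_exp_int]
  rcases hσ with h | h <;> rw [h] <;> ring_nf

section ising2

variable {V E : Type*} [Fintype V] [DecidableEq V] [Fintype E] [DecidableEq E]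
  (i j : E → V)

lemma G_integrable (β : ℝ) (τ : V → ℤˣ) :
    Integrable (fun J : E → ℝ =>
        Real.exp (β * isingHJ i j J τ) * (isingU i j β J / isingZJ i j β J))
      (Measure.pi fun _ : E => gaussianReal 0 1) := by
  have hcont : Continuous fun J : E → ℝ =>
      Real.exp (β * isingHJ i j J τ) * (isingU i j β J / isingZJ i j β J) :=
    (Real.continuous_exp.comp (continuous_const.mul (isingHJ_continuous i j τ))).mul
      ((isingU_continuous i j β).div (isingZJ_continuous i j β)
        fun J => (isingZJ_pos i j β J).ne')
  refine Integrable.mono' (g := fun J => ∑ _S : V → ℤˣ, ∑ e0 : E,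
      ∏ e, ((if e = e0 then |J e| else 1) * Real.exp (β * spinSign i j τ e * J e)))
    ?_ hcont.aestronglyMeasurable (ae_of_all _ fun J => ?_)
  · refine integrable_finset_sum _ fun S _ => integrable_finset_sum _ fun e0 _ => ?_
    refine pi_integrable_prod
      (fun e x => (if e = e0 then |x| else 1) * Real.exp (β * spinSign i j τ e * x))
      (fun e => ?_)
    by_cases h : e = e0
    · subst h
      simp only [if_pos rfl]
      exact gauss_abs_exp_integrable _
    · simp only [if_neg h, one_mul]
      exact gauss_exp_integrable _
  · rw [Real.norm_eq_abs, abs_mul, abs_of_pos (Real.exp_pos _)]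
    have h1 := absUdivZ_le i j β J
    have h2 : (∑ S : V → ℤˣ, |isingHJ i j J S|) ≤ ∑ _S : V → ℤˣ, ∑ e, |J e| :=
      Finset.sum_le_sum fun S _ => absH_le i j J S
    calc Real.exp (β * isingHJ i j J τ) * |isingU i j β J / isingZJ i j β J|
        ≤ Real.exp (β * isingHJ i j J τ) * ∑ _S : V → ℤˣ, ∑ e, |J e| :=
          mul_le_mul_of_nonneg_left (h1.trans h2) (Real.exp_pos _).le
      _ = ∑ _S : V → ℤˣ, ∑ e0 : E,
            ∏ e, ((if e = e0 then |J e| else 1) * Real.exp (β * spinSign i j τ e * J e)) := by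
          rw [Finset.mul_sum]
          refine Finset.sum_congr rfl fun S _ => ?_
          rw [Finset.mul_sum]
          refine Finset.sum_congr rfl fun e0 _ => ?_
          rw [prod_factor_eq, ← exp_H]
          ring

lemma F_eq_G (β : ℝ) (τ : V → ℤˣ) :
    (∫ J : E → ℝ, Real.exp (β * ∑ e, J e) * (isingU i j β J / isingZJ i j β J)
      ∂(Measure.pi fun _ : E => gaussianReal 0 1))
    = ∫ J : E → ℝ, Real.exp (β * isingHJ i j J τ) * (isingU i j β J / isingZJ i j β J)
      ∂(Measure.pi fun _ : E => gaussianReal 0 1) := by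
  have hmp := measurePreserving_signs (fun e => spinSign i j τ e)
    (fun e => spinSign_cases i j τ e)
  have hinv : Function.Involutive (fun (J : E → ℝ) e => spinSign i j τ e * J e) := by
    intro J
    funext e
    show spinSign i j τ e * (spinSign i j τ e * J e) = J e
    rcases spinSign_cases i j τ e with h | h <;> rw [h] <;> ring
  let Teq : (E → ℝ) ≃ᵐ (E → ℝ) :=
    { toEquiv := hinv.toPerm _
      measurable_toFun := hmp.measurable
      measurable_invFun := hmp.measurable }
  have hmp' : MeasurePreserving (⇑Teq)
      (Measure.pi fun _ : E => gaussianReal 0 1)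
      (Measure.pi fun _ : E => gaussianReal 0 1) := hmp
  have key := hmp'.integral_comp Teq.measurableEmbedding
    (fun J : E → ℝ => Real.exp (β * ∑ e, J e) * (isingU i j β J / isingZJ i j β J))
  rw [← key]
  refine integral_congr_ae (ae_of_all _ fun J => ?_)
  show Real.exp (β * ∑ e, spinSign i j τ e * J e)
      * (isingU i j β (fun e => spinSign i j τ e * J e)
        / isingZJ i j β (fun e => spinSign i j τ e * J e)) = _
  rw [isingU_gauge, isingZJ_gauge,
    show ∑ e, spinSign i j τ e * J e = isingHJ i j J τ by
      rw [isingHJ_eq]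
      exact Finset.sum_congr rfl fun e _ => mul_comm _ _]

lemma H_rep (β : ℝ) (S : V → ℤˣ) (J : E → ℝ) :
    isingHJ i j J S * Real.exp (β * isingHJ i j J S)
      = ∑ e0 : E, ∏ e, ((if e = e0 then spinSign i j S e * J e else 1)
          * Real.exp (β * spinSign i j S e * J e)) := by
  simp_rw [prod_factor_eq (fun e => spinSign i j S e * J e)]
  rw [← Finset.sum_mul, ← exp_H]
  congr 1
  rw [isingHJ_eq]
  exact Finset.sum_congr rfl fun e _ => mul_comm _ _

lemma prod_integrable (β : ℝ) (S : V → ℤˣ) (e0 : E) :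
    Integrable (fun J : E → ℝ => ∏ e, ((if e = e0 then spinSign i j S e * J e else 1)
        * Real.exp (β * spinSign i j S e * J e)))
      (Measure.pi fun _ : E => gaussianReal 0 1) := by
  refine pi_integrable_prod
    (fun e x => (if e = e0 then spinSign i j S e * x else 1)
      * Real.exp (β * spinSign i j S e * x)) (fun e => ?_)
  by_cases h : e = e0
  · subst h
    simp only [if_pos rfl]
    refine ((gauss_id_exp_integrable (β * spinSign i j S e)).const_mul
      (spinSign i j S e)).congr (ae_of_all _ fun x => ?_)
    simp only [if_pos rfl, if_true, eq_self_iff_true]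
    ring
  · simp only [if_neg h, one_mul]
    exact gauss_exp_integrable _

lemma HS_integrable (β : ℝ) (S : V → ℤˣ) :
    Integrable (fun J : E → ℝ => isingHJ i j J S * Real.exp (β * isingHJ i j J S))
      (Measure.pi fun _ : E => gaussianReal 0 1) := by
  have h : Integrable (fun J : E → ℝ => ∑ e0 : E,
      ∏ e, ((if e = e0 then spinSign i j S e * J e else 1)
        * Real.exp (β * spinSign i j S e * J e)))
      (Measure.pi fun _ : E => gaussianReal 0 1) :=
    integrable_finset_sum _ fun e0 _ => prod_integrable i j β S e0
  exact h.congr (ae_of_all _ fun J => (H_rep i j β S J).symm)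

lemma HS_integral (β : ℝ) (S : V → ℤˣ) :
    ∫ J : E → ℝ, isingHJ i j J S * Real.exp (β * isingHJ i j J S)
        ∂(Measure.pi fun _ : E => gaussianReal 0 1)
      = (Fintype.card E : ℝ) * (β * Real.exp (β ^ 2 / 2) ^ (Fintype.card E)) := by
  simp_rw [H_rep i j β S]
  rw [integral_finset_sum _ fun e0 _ => prod_integrable i j β S e0]
  have hterm : ∀ e0 : E, (∫ J : E → ℝ, ∏ e, ((if e = e0 then spinSign i j S e * J e else 1)
      * Real.exp (β * spinSign i j S e * J e))
      ∂(Measure.pi fun _ : E => gaussianReal 0 1))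
      = β * Real.exp (β ^ 2 / 2) ^ (Fintype.card E) := by
    intro e0
    rw [pi_integral_prod (fun e x => (if e = e0 then spinSign i j S e * x else 1)
      * Real.exp (β * spinSign i j S e * x))]
    have hfac : ∀ e : E, (∫ x, (if e = e0 then spinSign i j S e * x else 1)
        * Real.exp (β * spinSign i j S e * x) ∂(gaussianReal 0 1))
        = (if e = e0 then β else 1) * Real.exp (β ^ 2 / 2) := by
      intro e
      by_cases h : e = e0
      · simp only [if_pos h]
        exact sign_moment β (spinSign_cases i j S e)
      · simp only [if_neg h, one_mul]
        exact sign_exp_moment β (spinSign_cases i j S e)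
    simp_rw [hfac]
    rw [Finset.prod_mul_distrib, Finset.prod_ite_eq' Finset.univ e0 (fun _ => β),
      Finset.prod_const]
    simp [Finset.card_univ]
  simp_rw [hterm]
  rw [Finset.sum_const, Finset.card_univ, nsmul_eq_mul]

end ising2

/-- internal energy on the Nishimori line of the Gaussian
Edwards-Anderson model. -/
theorem stmt_19 {V E : Type*} [Fintype V] [DecidableEq V] [Fintype E] [DecidableEq E]
    (i j : E → V) (hij : ∀ e, i e ≠ j e)
    (β : ℝ) :
    Real.exp (-(Fintype.card E : ℝ) * β ^ 2 / 2) *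
        ∫ J : E → ℝ,
          Real.exp (β * ∑ e, J e) *
            ((∑ S : V → ℤˣ, isingHJ i j J S * Real.exp (β * isingHJ i j J S)) /
              isingZJ i j β J)
          ∂(Measure.pi fun _ : E => gaussianReal 0 1)
      = (Fintype.card E : ℝ) * β := by
  classical
  have hK : (0:ℝ) < (Fintype.card (V → ℤˣ) : ℝ) := by exact_mod_cast Fintype.card_pos
  show Real.exp (-(Fintype.card E : ℝ) * β ^ 2 / 2) *
      (∫ J : E → ℝ, Real.exp (β * ∑ e, J e) * (isingU i j β J / isingZJ i j β J)
        ∂(Measure.pi fun _ : E => gaussianReal 0 1)) = (Fintype.card E : ℝ) * β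
  have hsum : ∀ J : E → ℝ, (∑ τ : V → ℤˣ,
      Real.exp (β * isingHJ i j J τ) * (isingU i j β J / isingZJ i j β J))
      = isingU i j β J := by
    intro J
    rw [← Finset.sum_mul,
      show (∑ τ : V → ℤˣ, Real.exp (β * isingHJ i j J τ)) = isingZJ i j β J from rfl,
      mul_comm, div_mul_cancel₀ _ (isingZJ_pos i j β J).ne']
  have key : (Fintype.card (V → ℤˣ) : ℝ) *
      (∫ J : E → ℝ, Real.exp (β * ∑ e, J e) * (isingU i j β J / isingZJ i j β J)
        ∂(Measure.pi fun _ : E => gaussianReal 0 1))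
      = (Fintype.card (V → ℤˣ) : ℝ) *
        ((Fintype.card E : ℝ) * (β * Real.exp (β ^ 2 / 2) ^ (Fintype.card E))) := by
    calc (Fintype.card (V → ℤˣ) : ℝ) *
        (∫ J : E → ℝ, Real.exp (β * ∑ e, J e) * (isingU i j β J / isingZJ i j β J)
          ∂(Measure.pi fun _ : E => gaussianReal 0 1))
        = ∑ τ : V → ℤˣ, ∫ J : E → ℝ,
            Real.exp (β * isingHJ i j J τ) * (isingU i j β J / isingZJ i j β J)
            ∂(Measure.pi fun _ : E => gaussianReal 0 1) := by
          have h := Finset.sum_congr rfl fun (τ : V → ℤˣ) (_ : τ ∈ Finset.univ) =>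
            (F_eq_G i j β τ).symm
          rw [h, Finset.sum_const, Finset.card_univ, nsmul_eq_mul]
      _ = ∫ J : E → ℝ, ∑ τ : V → ℤˣ,
            Real.exp (β * isingHJ i j J τ) * (isingU i j β J / isingZJ i j β J)
            ∂(Measure.pi fun _ : E => gaussianReal 0 1) :=
          (integral_finset_sum _ fun τ _ => G_integrable i j β τ).symm
      _ = ∫ J : E → ℝ, isingU i j β J ∂(Measure.pi fun _ : E => gaussianReal 0 1) :=
          integral_congr_ae (ae_of_all _ fun J => hsum J)
      _ = ∫ J : E → ℝ, ∑ S : V → ℤˣ, isingHJ i j J S * Real.exp (β * isingHJ i j J S)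
            ∂(Measure.pi fun _ : E => gaussianReal 0 1) := rfl
      _ = ∑ S : V → ℤˣ, ∫ J : E → ℝ, isingHJ i j J S * Real.exp (β * isingHJ i j J S)
            ∂(Measure.pi fun _ : E => gaussianReal 0 1) :=
          integral_finset_sum _ fun S _ => HS_integrable i j β S
      _ = (Fintype.card (V → ℤˣ) : ℝ) *
            ((Fintype.card E : ℝ) * (β * Real.exp (β ^ 2 / 2) ^ (Fintype.card E))) := by
          simp_rw [HS_integral i j β]
          rw [Finset.sum_const, Finset.card_univ, nsmul_eq_mul]
  have hint : (∫ J : E → ℝ, Real.exp (β * ∑ e, J e) * (isingU i j β J / isingZJ i j β J)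
        ∂(Measure.pi fun _ : E => gaussianReal 0 1))
      = (Fintype.card E : ℝ) * (β * Real.exp (β ^ 2 / 2) ^ (Fintype.card E)) :=
    mul_left_cancel₀ hK.ne' key
  rw [hint, ← Real.exp_nat_mul]
  have ha : Real.exp (-((Fintype.card E : ℝ) * (β ^ 2 / 2)))
      * Real.exp ((Fintype.card E : ℝ) * (β ^ 2 / 2)) = 1 := by
    rw [← Real.exp_add]
    simp
  rw [show -(Fintype.card E : ℝ) * β ^ 2 / 2 = -((Fintype.card E : ℝ) * (β ^ 2 / 2)) by ring]
  linear_combination ((Fintype.card E : ℝ) * β) * ha
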